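/- Let S be a semigroup satisfying the identity x·y·z·x·y = x·y for all x, y, z ∈ S (i.e., S is in GRB). Then the following are equivalent: (1) for all x, y, z, u, w ∈ S, x·y·z = x·y·w·z or x·y·z = x·u·y·z; (2) for all x, y, z ∈ S, x·y·y = x·y or z·z·x = z·x. -/
import Mathlib

/-- Duplication: in a GRB semigroup, `a*b*c = a*b*b*c`. -/
private lemma grb_dup {S : Type*} [Semigroup S]
    (hGRB : ∀ x y z : S, x * y * z * x * y = x * y) (a b c : S) :
    a * b * c = a * b * b * c := by
  calc a * b * c
      = (a * b * (b * c) * a * b) * c := congrArg (· * c) (hGRB a b (b * c)).symm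
    _ = (a * b) * (b * c * a * b * c) := by simp only [mul_assoc]
    _ = (a * b) * (b * c) := congrArg ((a * b) * ·) (hGRB b c a)
    _ = a * b * b * c := by simp only [mul_assoc]

/-- Middle deletion: in a GRB semigroup, `a*b*m*c*d = a*b*c*d`. -/
private lemma grb_mid {S : Type*} [Semigroup S]
    (hGRB : ∀ x y z : S, x * y * z * x * y = x * y) (a b m c d : S) :
    a * b * m * c * d = a * b * c * d := by
  have h : a * b * c * d = a * b * m * c * d := by
    calc a * b * c * d
        = (a * b) * (c * d) := by simp only [mul_assoc]
      _ = (a * b * (m * (c * d)) * a * b) * (c * d) :=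
          congrArg (· * (c * d)) (hGRB a b (m * (c * d))).symm
      _ = (a * b * m) * (c * d * (a * b) * c * d) := by simp only [mul_assoc]
      _ = (a * b * m) * (c * d) := congrArg ((a * b * m) * ·) (hGRB c d (a * b))
      _ = a * b * m * c * d := by simp only [mul_assoc]
  exact h.symm

/-- Dichotomy step: if condition (2) holds and some `a*b*b ≠ a*b`, then
    `c*c*v = c*v` for all `c v`. -/
private lemma grb_stepA {S : Type*} [Semigroup S]
    (hGRB : ∀ x y z : S, x * y * z * x * y = x * y)
    (h2 : ∀ x y z : S, x * y * y = x * y ∨ z * z * x = z * x)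
    (a b : S) (hne : a * b * b ≠ a * b) :
    ∀ c v : S, c * c * v = c * v := by
  intro c v
  rcases h2 (v * a) b c with h | h
  · exfalso
    apply hne
    calc a * b * b
        = (a * b * v * a * b) * b := congrArg (· * b) (hGRB a b v).symm
      _ = (a * b) * (v * a * b * b) := by simp only [mul_assoc]
      _ = (a * b) * (v * a * b) := congrArg ((a * b) * ·) h
      _ = a * b * v * a * b := by simp only [mul_assoc]
      _ = a * b := hGRB a b v
  · -- h : c * c * (v * a) = c * (v * a)
    have key : c * v = c * c * v := by
      calc c * v
          = c * v * a * c * v := (hGRB c v a).symm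
        _ = (c * (v * a)) * (c * v) := by simp only [mul_assoc]
        _ = (c * c * (v * a)) * (c * v) := congrArg (· * (c * v)) h.symm
        _ = c * (c * v * a * c * v) := by simp only [mul_assoc]
        _ = c * (c * v) := congrArg (c * ·) (hGRB c v a)
        _ = c * c * v := by simp only [mul_assoc]
    exact key.symm

theorem stmt_0 {S : Type*} [Semigroup S]
    (hGRB : ∀ x y z : S, x * y * z * x * y = x * y) :
    (∀ x y z u w : S, x * y * z = x * y * w * z ∨ x * y * z = x * u * y * z) ↔
    (∀ x y z : S, x * y * y = x * y ∨ z * z * x = z * x) := by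
  constructor
  · intro h1 x y z
    rcases h1 z x y z y with h | h
    · -- h : z * x * y = z * x * y * y
      left
      have key : x * y = x * y * y := by
        calc x * y
            = x * y * z * x * y := (hGRB x y z).symm
          _ = (x * y) * (z * x * y) := by simp only [mul_assoc]
          _ = (x * y) * (z * x * y * y) := congrArg ((x * y) * ·) h
          _ = (x * y * z * x * y) * y := by simp only [mul_assoc]
          _ = (x * y) * y := congrArg (· * y) (hGRB x y z)
      exact key.symm
    · -- h : z * x * y = z * z * x * y
      right
      have key : z * x = z * z * x := by
        calc z * x
            = z * x * y * z * x := (hGRB z x y).symm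
          _ = (z * x * y) * (z * x) := by simp only [mul_assoc]
          _ = (z * z * x * y) * (z * x) := congrArg (· * (z * x)) h
          _ = z * (z * x * y * z * x) := by simp only [mul_assoc]
          _ = z * (z * x) := congrArg (z * ·) (hGRB z x y)
          _ = z * z * x := by simp only [mul_assoc]
      exact key.symm
  · intro h2 x y z u w
    by_cases hy : y * z * z = y * z
    · by_cases hw : w * z * z = w * z
      · left
        have e1 : x * y * z = x * y * z * z := by
          calc x * y * z
              = x * y * y * z := grb_dup hGRB x y z
            _ = (x * y) * (y * z) := by simp only [mul_assoc]
            _ = (x * y) * (y * z * z) := congrArg ((x * y) * ·) hy.symm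
            _ = x * y * y * z * z := by simp only [mul_assoc]
            _ = x * y * z * z := grb_mid hGRB x y y z z
        have e2 : x * y * w * z = x * y * z * z := by
          calc x * y * w * z
              = (x * y) * (w * z) := by simp only [mul_assoc]
            _ = (x * y) * (w * z * z) := congrArg ((x * y) * ·) hw.symm
            _ = x * y * w * z * z := by simp only [mul_assoc]
            _ = x * y * z * z := grb_mid hGRB x y w z z
        exact e1.trans e2.symm
      · right
        have hA := grb_stepA hGRB h2 w z hw
        calc x * y * z
            = (x * x * y) * z := congrArg (· * z) (hA x y).symm
          _ = x * x * u * y * z := (grb_mid hGRB x x u y z).symm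
          _ = (x * x * u) * (y * z) := by simp only [mul_assoc]
          _ = (x * u) * (y * z) := congrArg (· * (y * z)) (hA x u)
          _ = x * u * y * z := by simp only [mul_assoc]
    · right
      have hA := grb_stepA hGRB h2 y z hy
      calc x * y * z
          = (x * x * y) * z := congrArg (· * z) (hA x y).symm
        _ = x * x * u * y * z := (grb_mid hGRB x x u y z).symm
        _ = (x * x * u) * (y * z) := by simp only [mul_assoc]
        _ = (x * u) * (y * z) := congrArg (· * (y * z)) (hA x u)
        _ = x * u * y * z := by simp only [mul_assoc]
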